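/- Let (W,S) be the dihedral Coxeter group I_2(m) with generators s_1, s_2. For the 2-dimensional representation ρ_j of the generic Hecke algebra given by ρ_j(T_{s_1}) = [[−v_{s_1}^{-1}, 0],[μ_j, v_{s_2}]] and ρ_j(T_{s_2}) = [[v_{s_2}, 1],[0, −v_{s_2}^{-1}]] with μ_j = v_{s_1}v_{s_2}^{-1} + ζ^j + ζ^{-j} + v_{s_1}^{-1}v_{s_2}, the symmetric matrix Ω_j = [[v_{s_1}μ_j(v_{s_2}+v_{s_2}^{-1}), v_{s_1}μ_j],[v_{s_1}μ_j, v_{s_1}(v_{s_2}+v_{s_1}^{-1})]] satisfies Ω_j ρ_j(T_s) = ρ_j(T_s)^tr Ω_j for s ∈ {s_1, s_2}. -/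

import Mathlib

open Matrix

/-- in type I₂(m), the symmetric matrix Ω_j intertwines the
2-dimensional representation ρ_j with its transpose on both generators:
Ω_j ρ_j(T_{s_i}) = ρ_j(T_{s_i})ᵀ Ω_j for i = 1,2. -/
theorem I2_invariant_form
    {R : Type*} [CommRing R] (m j : ℕ) (hm : 3 ≤ m)
    (v1 v2 ζ : Rˣ) (hζ : ζ ^ m = 1)
    (μ : R) (hμ : μ = (v1 : R) * ((v2⁻¹ : Rˣ) : R) + ((ζ ^ j : Rˣ) : R) + ((ζ⁻¹ ^ j : Rˣ) : R) + ((v1⁻¹ : Rˣ) : R) * (v2 : R))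
    (ρ1 ρ2 Ω : Matrix (Fin 2) (Fin 2) R)
    (hρ1 : ρ1 = Matrix.of !![-((v1⁻¹ : Rˣ) : R), 0; μ, (v2 : R)])
    (hρ2 : ρ2 = Matrix.of !![(v2 : R), 1; 0, -((v2⁻¹ : Rˣ) : R)])
    (hΩ : Ω = Matrix.of !![(v1 : R) * μ * ((v2 : R) + ((v2⁻¹ : Rˣ) : R)), (v1 : R) * μ; (v1 : R) * μ, (v1 : R) * ((v2 : R) + ((v1⁻¹ : Rˣ) : R))]) :
    Ω * ρ1 = ρ1ᵀ * Ω ∧ Ω * ρ2 = ρ2ᵀ * Ω := by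
  have h1 : (v1 : R) * ((v1⁻¹ : Rˣ) : R) = 1 := by
    rw [← Units.val_mul, mul_inv_cancel, Units.val_one]
  have h2 : (v2 : R) * ((v2⁻¹ : Rˣ) : R) = 1 := by
    rw [← Units.val_mul, mul_inv_cancel, Units.val_one]
  subst hρ1 hρ2 hΩ
  simp only [show ∀ M : Matrix (Fin 2) (Fin 2) R, Matrix.of M = M from fun _ => rfl]
  constructor <;>
  · ext i k
    fin_cases i <;> fin_cases k <;>
      simp [Matrix.mul_apply, Fin.sum_univ_succ, Matrix.transpose_apply] <;>
      first
        | ring1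
        | linear_combination -μ * h1
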